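/- Let q_0, …, q_{d−1} be arbitrary real weights and suppose the value function ν : P({1,…,d}) → ℝ satisfies ν(T) = ν(⌊T⌋) for every T ⊆ {1,…,d}. Then for every i ∈ {1,…,d}, the semivalue φ^q_i = Σ_{S ⊆ {1,…,d} ∖ {i}} q_{|S|} · ( ν(S ∪ {i}) − ν(S) ) satisfies φ^q_i = Σ_{U irreducible} ν(U) · w^q_i(U), where the sum is over all irreducible subsets U ⊆ {1,…,d} and w^q_i(U) = Σ_{T : U ⊆ T ⊆ ⌈U⌉} ( 1[i ∈ T] · q_{|T|−1} − 1[i ∉ T] · q_{|T|} ). -/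
import Mathlib


/-- Vertex type: `some i` is the feature vertex `i`, `none` is the target vertex `Y`. -/
abbrev Vtx (d : ℕ) := Option (Fin d)

/-- `PathTo E j p` means `p` is a directed path in the graph with edge relation `E`
from the feature vertex `j` to the target vertex `Y` (encoded as `none`). -/
def PathTo {d : ℕ} (E : Vtx d → Vtx d → Prop) (j : Fin d) (p : List (Vtx d)) : Prop :=
  p.Chain' E ∧ p.head? = some (some j) ∧ p.getLast? = some none

open Classical in
/-- The basis `⌊S⌋` of `S`: all `j ∈ S` having a directed path to `Y`
whose only vertex in `S` is `j`. -/
noncomputable def bas {d : ℕ} (E : Vtx d → Vtx d → Prop) (S : Finset (Fin d)) :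
    Finset (Fin d) :=
  S.filter fun j => ∃ p : List (Vtx d), PathTo E j p ∧ ∀ i ∈ S, some i ∈ p → i = j

open Classical in
/-- The closure `⌈S⌉` of `S`: all `j ∈ {1,…,d}` such that every directed path
from `j` to `Y` contains a vertex of `S`. -/
noncomputable def clos {d : ℕ} (E : Vtx d → Vtx d → Prop) (S : Finset (Fin d)) :
    Finset (Fin d) :=
  Finset.univ.filter fun j => ∀ p : List (Vtx d), PathTo E j p → ∃ i ∈ S, some i ∈ p

open Classical

lemma mem_bas_iff {d : ℕ} {E : Vtx d → Vtx d → Prop} {S : Finset (Fin d)} {j : Fin d} :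
    j ∈ bas E S ↔ j ∈ S ∧ ∃ p : List (Vtx d), PathTo E j p ∧ ∀ i ∈ S, some i ∈ p → i = j := by
  simp [bas]

lemma bas_subset {d : ℕ} (E : Vtx d → Vtx d → Prop) (S : Finset (Fin d)) :
    bas E S ⊆ S := Finset.filter_subset _ _

lemma mem_clos_iff {d : ℕ} {E : Vtx d → Vtx d → Prop} {S : Finset (Fin d)} {j : Fin d} :
    j ∈ clos E S ↔ ∀ p : List (Vtx d), PathTo E j p → ∃ i ∈ S, some i ∈ p := by
  simp [clos]

lemma getLast?_suffix {α : Type*} {l s : List α} (h : s <:+ l) (hs : s ≠ []) :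
    s.getLast? = l.getLast? := by
  obtain ⟨t, rfl⟩ := h
  rw [List.getLast?_append]
  rcases hx : s.getLast? with _ | x
  · rw [List.getLast?_eq_none_iff] at hx; exact absurd hx hs
  · simp

lemma getLast?_cons_ne {α : Type*} {x : α} {b : List α} (h : b ≠ []) :
    (x :: b).getLast? = b.getLast? :=
  (getLast?_suffix (List.suffix_cons x b) h).symm

/-- a suffix path starting at any vertex occurring on a path -/
lemma suffix_path {d : ℕ} {E : Vtx d → Vtx d → Prop} {p : List (Vtx d)}
    (hc : p.Chain' E) (hl : p.getLast? = some none) {k : Fin d} (hk : some k ∈ p) :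
    ∃ s : List (Vtx d), PathTo E k s ∧ s <:+ p := by
  obtain ⟨a, b, rfl⟩ := List.append_of_mem hk
  refine ⟨some k :: b, ⟨hc.suffix (List.suffix_append a _), rfl, ?_⟩, List.suffix_append a _⟩
  rw [getLast?_suffix (List.suffix_append a _) (by simp)]
  exact hl

/-- from any `T`-vertex on a path one can find a suffix path from a `T`-vertex
whose only `T`-vertex is its start -/
lemma last_T_vertex {d : ℕ} {E : Vtx d → Vtx d → Prop} (T : Finset (Fin d)) :
    ∀ N : ℕ, ∀ p : List (Vtx d), p.length ≤ N → p.Chain' E → p.getLast? = some none →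
      ∀ k : Fin d, k ∈ T → some k ∈ p →
      ∃ m ∈ T, ∃ s : List (Vtx d), PathTo E m s ∧ (∀ v ∈ s, v ∈ p) ∧
        ∀ n ∈ T, some n ∈ s → n = m := by
  intro N
  induction N with
  | zero =>
    intro p hlen _ _ k _ hk
    interval_cases hp : p.length
    · simp [List.length_eq_zero_iff.1 hp] at hk
  | succ N ih =>
    intro p hlen hc hl k hkT hk
    obtain ⟨a, b, rfl⟩ := List.append_of_mem hk
    have hsuf : (some k :: b) <:+ a ++ some k :: b := List.suffix_append a _
    have hcs : (some k :: b).Chain' E := hc.suffix hsuf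
    have hls : (some k :: b).getLast? = some none := by
      rw [getLast?_suffix hsuf (by simp)]; exact hl
    by_cases hex : ∃ n ∈ T, some n ∈ b
    · obtain ⟨n, hnT, hnb⟩ := hex
      have hbne : b ≠ [] := by rintro rfl; simp at hnb
      have hblen : b.length ≤ N := by
        have : (a ++ some k :: b).length = a.length + b.length + 1 := by simp; omega
        omega
      have hbc : b.Chain' E := hcs.tail
      have hbl : b.getLast? = some none := by
        rwa [getLast?_cons_ne hbne] at hls
      obtain ⟨m, hmT, s, hps, hsub, honly⟩ := ih b hblen hbc hbl n hnT hnb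
      exact ⟨m, hmT, s, hps, fun v hv => hsuf.subset (List.mem_cons_of_mem _ (hsub v hv)),
        honly⟩
    · refine ⟨k, hkT, some k :: b, ⟨hcs, rfl, hls⟩, fun v hv => hsuf.subset hv, ?_⟩
      intro n hnT hns
      rcases List.mem_cons.1 hns with h | h
      · exact Option.some_injective _ h
      · exact absurd ⟨n, hnT, h⟩ hex

lemma bas_idem {d : ℕ} (E : Vtx d → Vtx d → Prop) (T : Finset (Fin d)) :
    bas E (bas E T) = bas E T := by
  apply Finset.Subset.antisymm (bas_subset _ _)
  intro j hj
  obtain ⟨hjT, p, hp, honly⟩ := mem_bas_iff.1 hj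
  exact mem_bas_iff.2 ⟨hj, p, hp, fun i hi hip => honly i (bas_subset E T hi) hip⟩

lemma subset_clos_bas {d : ℕ} (E : Vtx d → Vtx d → Prop) (T : Finset (Fin d)) :
    T ⊆ clos E (bas E T) := by
  intro j hj
  refine mem_clos_iff.2 fun p hp => ?_
  obtain ⟨hc, hh, hl⟩ := hp
  have hjp : some j ∈ p := List.mem_of_mem_head? (by rw [hh]; rfl)
  obtain ⟨m, hmT, s, hps, hsub, honly⟩ :=
    last_T_vertex T p.length p le_rfl hc hl j hj hjp
  refine ⟨m, mem_bas_iff.2 ⟨hmT, s, hps, honly⟩, ?_⟩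
  exact hsub _ (List.mem_of_mem_head? (by rw [hps.2.1]; rfl))

lemma chain'_transGen {α : Type*} {E : α → α → Prop} :
    ∀ {l : List α} {x y : α}, (x :: l).Chain' E → y ∈ l → Relation.TransGen E x y := by
  intro l
  induction l with
  | nil => simp
  | cons a t ih =>
    intro x y hc hy
    have h1 : E x a := (List.isChain_cons_cons.1 hc).1
    rcases List.mem_cons.1 hy with rfl | hy
    · exact Relation.TransGen.single h1
    · exact Relation.TransGen.head h1 (ih (List.isChain_cons_cons.1 hc).2 hy)

lemma bas_eq_of_between {d : ℕ} {E : Vtx d → Vtx d → Prop}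
    (hacyc : ∀ v : Vtx d, ¬ Relation.TransGen E v v)
    {U T : Finset (Fin d)} (hU : bas E U = U) (hUT : U ⊆ T) (hTc : T ⊆ clos E U) :
    bas E T = U := by
  ext j
  constructor
  · intro hj
    obtain ⟨hjT, p, hp, honly⟩ := mem_bas_iff.1 hj
    obtain ⟨u, huU, hup⟩ := mem_clos_iff.1 (hTc hjT) p hp
    exact (honly u (hUT huU) hup) ▸ huU
  · intro hjU
    have hjbas : j ∈ bas E U := by rw [hU]; exact hjU
    obtain ⟨_, p, hp, honlyU⟩ := mem_bas_iff.1 hjbas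
    refine mem_bas_iff.2 ⟨hUT hjU, p, hp, fun k hkT hkp => ?_⟩
    by_contra hne
    obtain ⟨hc, hh, hl⟩ := hp
    -- p = some j :: rest, some k ∈ rest since k ≠ j
    obtain ⟨v, rest, rfl⟩ : ∃ v rest, p = v :: rest := by
      cases p with
      | nil => simp at hh
      | cons v rest => exact ⟨v, rest, rfl⟩
    have hv : v = some j := by simpa using hh
    subst hv
    have hkrest : some k ∈ rest := by
      rcases List.mem_cons.1 hkp with h | h
      · exact absurd (Option.some_injective _ h) hne
      · exact h
    have hrne : rest ≠ [] := by rintro rfl; simp at hkrest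
    have hrc : rest.Chain' E := hc.tail
    have hrl : rest.getLast? = some none := by
      rwa [getLast?_cons_ne hrne] at hl
    obtain ⟨s, hs, hssuf⟩ := suffix_path hrc hrl hkrest
    obtain ⟨u, huU, hus⟩ := mem_clos_iff.1 (hTc hkT) s hs
    have huj : u = j := honlyU u huU (List.mem_cons_of_mem _ (hssuf.subset hus))
    have hjrest : some j ∈ rest := huj ▸ hssuf.subset hus
    exact hacyc (some j) (chain'_transGen hc hjrest)

/-- Semivalues with arbitrary weights `q` decompose over irreducible sets whenever
`ν(T) = ν(⌊T⌋)`. -/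
theorem stmt14 (d : ℕ) (E : Vtx d → Vtx d → Prop)
    (hacyc : ∀ v : Vtx d, ¬ Relation.TransGen E v v)
    (hY : ∀ v : Vtx d, ¬ E none v)
    (q : ℕ → ℝ)
    (ν : Finset (Fin d) → ℝ) (hν : ∀ T : Finset (Fin d), ν T = ν (bas E T))
    (i : Fin d) :
    (∑ S ∈ (Finset.univ.erase i).powerset, q S.card * (ν (insert i S) - ν S)) =
      ∑ U ∈ Finset.univ.powerset.filter (fun U : Finset (Fin d) => bas E U = U),
        ν U * ∑ T ∈ (clos E U).powerset.filter (fun T => U ⊆ T),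
          ((if i ∈ T then q (T.card - 1) else 0) -
           (if i ∉ T then q T.card else 0)) := by
  classical
  set W : Finset (Fin d) → ℝ := fun T =>
    (if i ∈ T then q (T.card - 1) else 0) - (if i ∉ T then q T.card else 0) with hW
  -- RHS = ∑ over all T of W T * ν (bas T)
  have fiber_eq : ∀ U : Finset (Fin d), bas E U = U →
      (Finset.univ.powerset.filter (fun T => bas E T = U)) =
      (clos E U).powerset.filter (fun T => U ⊆ T) := by
    intro U hU
    ext T
    simp only [Finset.mem_filter, Finset.mem_powerset]
    constructor
    · rintro ⟨-, rfl⟩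
      exact ⟨subset_clos_bas E T, bas_subset E T⟩
    · rintro ⟨h1, h2⟩
      exact ⟨Finset.subset_univ T, bas_eq_of_between hacyc hU h2 h1⟩
  have hRHS : (∑ U ∈ Finset.univ.powerset.filter (fun U : Finset (Fin d) => bas E U = U),
        ν U * ∑ T ∈ (clos E U).powerset.filter (fun T => U ⊆ T), W T)
      = ∑ T ∈ (Finset.univ : Finset (Fin d)).powerset, W T * ν (bas E T) := by
    rw [← Finset.sum_fiberwise_of_maps_to (g := bas E)
      (t := Finset.univ.powerset.filter (fun U : Finset (Fin d) => bas E U = U))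
      (fun T _ => by simp [bas_idem]) (fun T => W T * ν (bas E T))]
    refine Finset.sum_congr rfl fun U hU => ?_
    have hUirr : bas E U = U := (Finset.mem_filter.1 hU).2
    rw [fiber_eq U hUirr, Finset.mul_sum]
    refine Finset.sum_congr rfl fun T hT => ?_
    obtain ⟨h1, h2⟩ := Finset.mem_filter.1 hT
    rw [bas_eq_of_between hacyc hUirr h2 (Finset.mem_powerset.1 h1), mul_comm]
  rw [hRHS]
  have hν' : ∀ T : Finset (Fin d), W T * ν (bas E T) = W T * ν T := by
    intro T; rw [← hν]
  simp_rw [hν']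
  -- Now show LHS = ∑ T, W T * ν T
  have hsplit : ∑ T ∈ (Finset.univ : Finset (Fin d)).powerset, W T * ν T
      = (∑ T ∈ (Finset.univ : Finset (Fin d)).powerset,
            (if i ∈ T then q (T.card - 1) * ν T else 0))
        - ∑ T ∈ (Finset.univ : Finset (Fin d)).powerset,
            (if i ∉ T then q T.card * ν T else 0) := by
    rw [← Finset.sum_sub_distrib]
    refine Finset.sum_congr rfl fun T _ => ?_
    by_cases h : i ∈ T <;> simp [hW, h, sub_mul]
  rw [hsplit, ← Finset.sum_filter, ← Finset.sum_filter]
  have hfilter2 : (Finset.univ : Finset (Fin d)).powerset.filter (fun T => i ∉ T)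
      = (Finset.univ.erase i).powerset := by
    ext T
    simp [Finset.subset_erase]
  rw [hfilter2]
  have hbij : ∑ T ∈ (Finset.univ : Finset (Fin d)).powerset.filter (fun T => i ∈ T),
        q (T.card - 1) * ν T
      = ∑ S ∈ (Finset.univ.erase i).powerset, q S.card * ν (insert i S) := by
    refine (Finset.sum_bij' (fun S _ => insert i S) (fun T _ => T.erase i) ?_ ?_ ?_ ?_ ?_).symm
    · intro S hS
      simp only [Finset.mem_powerset, Finset.subset_erase] at hS
      simp [Finset.mem_filter]
    · intro T hT
      simp only [Finset.mem_filter, Finset.mem_powerset] at hT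
      simp [Finset.subset_erase, Finset.erase_subset_iff_of_mem, hT.2]
    · intro S hS
      simp only [Finset.mem_powerset, Finset.subset_erase] at hS
      exact Finset.erase_insert hS.2
    · intro T hT
      simp only [Finset.mem_filter] at hT
      exact Finset.insert_erase hT.2
    · intro S hS
      simp only [Finset.mem_powerset, Finset.subset_erase] at hS
      rw [Finset.card_insert_of_notMem hS.2]
      simp
  rw [hbij, ← Finset.sum_sub_distrib]
  refine Finset.sum_congr rfl fun S _ => ?_
  ring
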